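/- arXiv:2310.09154 — 2 statements merged into one kernel-verified Lean document; each statement's English description precedes it below -/
import Mathlib

section
/- Let F be a nonempty set of d × d density matrices, let ρ be a d × d density matrix, and let 0 < s < R_F(ρ). Then for every σ ∈ F there exists m ∈ {2, …, d} such that S_{m,ρ,s}(σ) < 0. -/
open scoped ComplexOrder ENNReal

/-- A density matrix: positive semidefinite (hence Hermitian) with trace 1. -/
def IsDensityMatrix {d : ℕ} (A : Matrix (Fin d) (Fin d) ℂ) : Prop :=
  A.PosSemidef ∧ A.trace = 1

/-- The generalized robustness `R_F(ρ)`, valued in the extended nonnegative reals: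
the infimum of `s ≥ 0` such that `(ρ + sτ)/(1 + s) ∈ F` for some density matrix `τ`
(`+∞` if no such `s` exists). -/
noncomputable def Robustness {d : ℕ} (F : Set (Matrix (Fin d) (Fin d) ℂ))
    (ρ : Matrix (Fin d) (Fin d) ℂ) : ℝ≥0∞ :=
  ⨅ s ∈ {s : ℝ | 0 ≤ s ∧ ∃ τ, IsDensityMatrix τ ∧
      ((1 : ℂ) + (s : ℂ))⁻¹ • (ρ + (s : ℂ) • τ) ∈ F}, ENNReal.ofReal s

/-- `Spoly A m` is the recursively defined quantity `S_m(A)`. -/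
noncomputable def Spoly {d : ℕ} (A : Matrix (Fin d) (Fin d) ℂ) : ℕ → ℂ
  | 0 => 1
  | m + 1 => ((m : ℂ) + 1)⁻¹ *
      ∑ l ∈ Finset.range (m + 1), (-1 : ℂ) ^ l * (A ^ (l + 1)).trace * Spoly A (m - l)

/-- `Sres ρ s m η = S_{m,ρ,s}(η) = S_m(((1+s)η − ρ)/s)`. -/
noncomputable def Sres {d : ℕ} (ρ : Matrix (Fin d) (Fin d) ℂ) (s : ℝ) (m : ℕ)
    (η : Matrix (Fin d) (Fin d) ℂ) : ℂ :=
  Spoly ((s : ℂ)⁻¹ • (((1 : ℂ) + (s : ℂ)) • η - ρ)) m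

/-! ### Auxiliary lemmas -/

lemma multiset_esymm_map {R S : Type*} [CommSemiring R] [CommSemiring S] (g : R →+* S)
    (s : Multiset R) (n : ℕ) : (s.map g).esymm n = g (s.esymm n) := by
  simp [Multiset.esymm, Multiset.powersetCard_map, Multiset.map_map, map_multiset_sum,
    Function.comp_def, map_multiset_prod]

lemma multiset_esymm_zero {R : Type*} [CommSemiring R] (s : Multiset R) : s.esymm 0 = 1 := by
  simp [Multiset.esymm]

lemma multiset_esymm_one {R : Type*} [CommSemiring R] (s : Multiset R) : s.esymm 1 = s.sum := by
  simp [Multiset.esymm, Multiset.powersetCard_one, Multiset.map_map]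

lemma newton_c {d : ℕ} (f : Fin d → ℂ) (k : ℕ) :
    (k : ℂ) * (Finset.univ.val.map f).esymm k =
      (-1 : ℂ) ^ (k + 1) * ∑ a ∈ (Finset.HasAntidiagonal.antidiagonal k).filter (fun a => a.1 < k),
        (-1 : ℂ) ^ a.1 * (Finset.univ.val.map f).esymm a.1 * ∑ i, f i ^ a.2 := by
  have h := congrArg (MvPolynomial.aeval f) (MvPolynomial.mul_esymm_eq_sum (Fin d) ℂ k)
  simpa [MvPolynomial.aeval_esymm_eq_multiset_esymm, MvPolynomial.psum, Finset.esymm_map_val,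
    map_sum, map_mul, map_pow, Finset.mul_sum] using h

lemma newton_c' {d : ℕ} (f : Fin d → ℂ) (m : ℕ) :
    ((m : ℂ) + 1) * (Finset.univ.val.map f).esymm (m + 1) =
      ∑ l ∈ Finset.range (m + 1),
        (-1 : ℂ) ^ l * (∑ i, f i ^ (l + 1)) * (Finset.univ.val.map f).esymm (m - l) := by
  set E : ℕ → ℂ := fun j => (Finset.univ.val.map f).esymm j with hE
  set P : ℕ → ℂ := fun j => ∑ i, f i ^ j with hP
  have h := newton_c f (m + 1)
  have h2 : (∑ a ∈ (Finset.HasAntidiagonal.antidiagonal (m+1)).filter (fun a => a.1 < m+1),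
      (-1 : ℂ) ^ a.1 * E a.1 * P a.2)
      = ∑ i ∈ Finset.range (m+1), (-1 : ℂ) ^ i * E i * P (m+1-i) := by
    rw [Finset.sum_filter, Finset.Nat.sum_antidiagonal_eq_sum_range_succ_mk,
      Finset.sum_range_succ]
    simp only [lt_irrefl, if_false, add_zero]
    refine Finset.sum_congr rfl fun i hi => ?_
    rw [if_pos (Finset.mem_range.mp hi)]
  rw [h2] at h
  push_cast at h
  rw [h, Finset.mul_sum]
  conv_rhs => rw [← Finset.sum_range_reflect]
  refine Finset.sum_congr rfl fun i hi => ?_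
  have him : i ≤ m := Nat.lt_succ_iff.mp (Finset.mem_range.mp hi)
  have e1 : m + 1 - 1 - i = m - i := by omega
  have e2 : m - (m - i) = i := by omega
  have e3 : m + 1 - i = (m - i) + 1 := by omega
  rw [e1, e2, e3]
  have hsgn : (-1:ℂ)^(m+1+1) * (-1:ℂ)^i = (-1:ℂ)^(m-i) := by
    rw [← pow_add]
    have : m+1+1+i = (m-i) + 2*(i+1) := by omega
    rw [this, pow_add, pow_mul, neg_one_sq, one_pow, mul_one]
  calc (-1:ℂ)^(m+1+1) * ((-1:ℂ)^i * E i * P (m-i+1))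
      = ((-1:ℂ)^(m+1+1) * (-1:ℂ)^i) * E i * P (m-i+1) := by ring
    _ = (-1:ℂ)^(m-i) * E i * P (m-i+1) := by rw [hsgn]
    _ = (-1:ℂ)^(m-i) * P (m-i+1) * E i := by ring

lemma trace_pow {d : ℕ} {A : Matrix (Fin d) (Fin d) ℂ} (hA : A.IsHermitian) (l : ℕ) :
    (A ^ l).trace = ∑ i, (hA.eigenvalues i : ℂ) ^ l := by
  set U : Matrix (Fin d) (Fin d) ℂ := (hA.eigenvectorUnitary : Matrix (Fin d) (Fin d) ℂ) with hU
  set D : Matrix (Fin d) (Fin d) ℂ :=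
    Matrix.diagonal (RCLike.ofReal ∘ hA.eigenvalues) with hD
  have h1 : U * star U = 1 := (Matrix.mem_unitaryGroup_iff).mp hA.eigenvectorUnitary.2
  have h2 : star U * U = 1 := (Matrix.mem_unitaryGroup_iff').mp hA.eigenvectorUnitary.2
  have key : ∀ k : ℕ, A ^ k = U * D ^ k * star U := by
    intro k
    induction k with
    | zero => simp [h1]
    | succ k ih =>
        rw [pow_succ, ih, pow_succ]
        calc U * D ^ k * star U * A = U * D ^ k * star U * (U * D * star U) := by
              rw [hA.spectral_theorem, Unitary.conjStarAlgAut_apply]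
          _ = U * D ^ k * (star U * U) * D * star U := by
              simp only [Matrix.mul_assoc]
          _ = U * (D ^ k * D) * star U := by rw [h2]; simp only [Matrix.mul_assoc, Matrix.mul_one]
  rw [key l, Matrix.trace_mul_comm, ← Matrix.mul_assoc, h2, Matrix.one_mul,
    Matrix.diagonal_pow, Matrix.trace_diagonal]
  simp

lemma spoly_eq_esymm {d : ℕ} {A : Matrix (Fin d) (Fin d) ℂ} (hA : A.IsHermitian) (m : ℕ) :
    Spoly A m = (Finset.univ.val.map (fun i => (hA.eigenvalues i : ℂ))).esymm m := by
  induction m using Nat.strong_induction_on with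
  | _ m ih =>
    match m with
    | 0 => simp [Spoly, Multiset.esymm]
    | m + 1 =>
      rw [Spoly]
      have h := newton_c' (fun i => (hA.eigenvalues i : ℂ)) m
      have hne : ((m : ℂ) + 1) ≠ 0 := Nat.cast_add_one_ne_zero m
      rw [inv_mul_eq_iff_eq_mul₀ hne, h]
      refine Finset.sum_congr rfl fun l hl => ?_
      rw [trace_pow hA, ih (m - l) (by omega)]

/-- If `0 < s < R_F(ρ)`, then for every free state `σ ∈ F` there exists
`m ∈ {2, …, d}` such that `S_{m,ρ,s}(σ) < 0`. -/
theorem exists_Sres_neg_of_lt_robustness {d : ℕ}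
    (F : Set (Matrix (Fin d) (Fin d) ℂ)) (hFne : F.Nonempty)
    (hF : ∀ σ ∈ F, IsDensityMatrix σ)
    (ρ : Matrix (Fin d) (Fin d) ℂ) (hρ : IsDensityMatrix ρ)
    (s : ℝ) (hs : 0 < s) (hsR : ENNReal.ofReal s < Robustness F ρ) :
    ∀ σ ∈ F, ∃ m ∈ Finset.Icc 2 d, Sres ρ s m σ < 0 := by
  intro σ hσF
  by_contra hcon
  push_neg at hcon
  have hσ := hF σ hσF
  have hs0 : (s : ℂ) ≠ 0 := by exact_mod_cast hs.ne'
  set A : Matrix (Fin d) (Fin d) ℂ := (s : ℂ)⁻¹ • (((1 : ℂ) + (s : ℂ)) • σ - ρ) with hAdef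
  have hA : A.IsHermitian := by
    have h1 : σ.conjTranspose = σ := hσ.1.1
    have h2 : ρ.conjTranspose = ρ := hρ.1.1
    show A.conjTranspose = A
    rw [hAdef]
    simp [Matrix.conjTranspose_smul, Matrix.conjTranspose_sub, h1, h2, Complex.star_def,
      Complex.conj_ofReal, map_inv₀, map_add, map_one]
  have htrA : A.trace = 1 := by
    rw [hAdef, Matrix.trace_smul, Matrix.trace_sub, Matrix.trace_smul, hσ.2, hρ.2]
    simp only [smul_eq_mul, mul_one]
    field_simp
    ring
  set lam : Fin d → ℝ := hA.eigenvalues with hlam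
  set sR : Multiset ℝ := Finset.univ.val.map lam with hsR'
  set eR : ℕ → ℝ := fun m => sR.esymm m with heR
  have hcoe : ∀ m, (Finset.univ.val.map (fun i => (lam i : ℂ))).esymm m = ((eR m : ℝ) : ℂ) := by
    intro m
    have hmm : Finset.univ.val.map (fun i => ((lam i : ℝ) : ℂ))
        = sR.map (Complex.ofRealHom : ℝ →+* ℂ) := by
      rw [hsR', Multiset.map_map]; rfl
    rw [hmm, multiset_esymm_map]; rfl
  have hSres : ∀ m, Sres ρ s m σ = ((eR m : ℝ) : ℂ) := by
    intro m
    rw [Sres, spoly_eq_esymm hA, hcoe]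
  have hcon' : ∀ m ∈ Finset.Icc 2 d, 0 ≤ eR m := by
    intro m hm
    have h := hcon m hm
    rw [hSres m] at h
    by_contra hneg
    push_neg at hneg
    exact h (by exact_mod_cast hneg)
  have hsum : sR.sum = 1 := by
    have h1 := trace_pow hA 1
    rw [pow_one, htrA] at h1
    simp only [pow_one] at h1
    have h2 : ((sR.sum : ℝ) : ℂ) = 1 := by
      have hss : sR.sum = ∑ i, lam i := rfl
      rw [hss]
      push_cast
      exact h1.symm
    exact_mod_cast h2
  have hneg : ∃ j, lam j < 0 := by
    by_contra hno
    push_neg at hno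
    have hPSD : A.PosSemidef := hA.posSemidef_iff_eigenvalues_nonneg.mpr hno
    have h1s : ((1 : ℂ) + (s : ℂ)) ≠ 0 := by
      have : ((1 + s : ℝ) : ℂ) ≠ 0 := Complex.ofReal_ne_zero.mpr (by linarith)
      push_cast at this
      exact this
    have hmem : s ∈ {s : ℝ | 0 ≤ s ∧ ∃ τ, IsDensityMatrix τ ∧
        ((1 : ℂ) + (s : ℂ))⁻¹ • (ρ + (s : ℂ) • τ) ∈ F} := by
      refine ⟨hs.le, A, ⟨hPSD, htrA⟩, ?_⟩
      have hAs : ρ + (s : ℂ) • A = ((1 : ℂ) + (s : ℂ)) • σ := by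
        rw [hAdef, smul_smul, mul_inv_cancel₀ hs0, one_smul]
        abel
      rw [hAs, smul_smul, inv_mul_cancel₀ h1s, one_smul]
      exact hσF
    have hle : Robustness F ρ ≤ ENNReal.ofReal s := by
      unfold Robustness
      exact iInf₂_le s hmem
    exact absurd hsR (not_lt.mpr hle)
  obtain ⟨j, hj⟩ := hneg
  set t : ℝ := -lam j with ht'
  have ht : 0 < t := by simp [ht']; linarith
  have hcard : Multiset.card sR = d := by simp [hsR']
  have hv := congrArg (Polynomial.eval t) (Multiset.prod_X_add_C_eq_sum_esymm sR)
  simp only [Polynomial.eval_multiset_prod, Multiset.map_map, Function.comp_def,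
    Polynomial.eval_add, Polynomial.eval_X, Polynomial.eval_C, Polynomial.eval_finset_sum,
    Polynomial.eval_mul, Polynomial.eval_pow, hcard] at hv
  have hzero : (sR.map (fun r => t + r)).prod = 0 := by
    apply Multiset.prod_eq_zero
    refine Multiset.mem_map.mpr ⟨lam j, ?_, by rw [ht']; ring⟩
    rw [hsR']
    exact Multiset.mem_map.mpr ⟨j, Finset.mem_univ_val j, rfl⟩
  rw [hzero] at hv
  have hpos : 0 < ∑ k ∈ Finset.range (d + 1), eR k * t ^ (d - k) := by
    apply Finset.sum_pos'
    · intro i hi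
      have hid : i ≤ d := Nat.lt_succ_iff.mp (Finset.mem_range.mp hi)
      have h0 : 0 ≤ eR i := by
        rcases Nat.lt_or_ge i 2 with h2 | h2
        · interval_cases i
          · rw [heR]; simp [multiset_esymm_zero]
          · rw [heR]; simp only [multiset_esymm_one, hsum]; norm_num
        · exact hcon' i (Finset.mem_Icc.mpr ⟨h2, hid⟩)
      exact mul_nonneg h0 (pow_nonneg ht.le _)
    · refine ⟨0, Finset.mem_range.mpr (by omega), ?_⟩
      rw [heR]
      simp only [multiset_esymm_zero, one_mul, Nat.sub_zero]
      positivity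
  rw [← hv] at hpos
  exact absurd hpos (lt_irrefl 0)
end

section
/- Let F be a nonempty closed set of d × d density matrices and let ρ be a d × d density matrix with ρ ∉ F and R_F(ρ) finite. Then sup { s > 0 : for every σ ∈ F there exists m ∈ {2, …, d} with S_{m,ρ,s}(σ) < 0 } = R_F(ρ). -/
open scoped ComplexOrder ENNReal

open Finset Matrix

noncomputable def Esym {d : ℕ} (μ : Fin d → ℝ) (m : ℕ) : ℝ :=
  ∑ t ∈ Finset.powersetCard m Finset.univ, ∏ i ∈ t, μ i

lemma Esym_zero {d : ℕ} (μ : Fin d → ℝ) : Esym μ 0 = 1 := by simp [Esym]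

lemma Esym_one {d : ℕ} (μ : Fin d → ℝ) : Esym μ 1 = ∑ i, μ i := by
  simp [Esym, Finset.powersetCard_one]

lemma Esym_nonneg {d : ℕ} {μ : Fin d → ℝ} (h : ∀ i, 0 ≤ μ i) (m : ℕ) : 0 ≤ Esym μ m :=
  Finset.sum_nonneg fun t _ => Finset.prod_nonneg fun i _ => h i

lemma Esym_of_gt {d : ℕ} (μ : Fin d → ℝ) {m : ℕ} (h : d < m) : Esym μ m = 0 := by
  rw [Esym, Finset.powersetCard_eq_empty.mpr (by simpa using h), Finset.sum_empty]

lemma prod_add_eq_sum_Esym {d : ℕ} (μ : Fin d → ℝ) (t : ℝ) :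
    ∏ i, (μ i + t) = ∑ m ∈ Finset.range (d + 1), Esym μ m * t ^ (d - m) := by
  have hc : (Finset.univ : Finset (Fin d)).card = d := by simp
  rw [Finset.prod_add]
  have h1 : ∀ S ∈ (Finset.univ : Finset (Fin d)).powerset,
      (∏ i ∈ S, μ i) * ∏ _i ∈ Finset.univ \ S, t = (∏ i ∈ S, μ i) * t ^ (d - S.card) := by
    intro S hS
    rw [Finset.prod_const, Finset.card_sdiff_of_subset (Finset.mem_powerset.mp hS), hc]
  rw [Finset.sum_congr rfl h1,
    Finset.sum_powerset _ (fun S => (∏ i ∈ S, μ i) * t ^ (d - S.card)), hc]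
  refine Finset.sum_congr rfl fun m _ => ?_
  rw [Esym, Finset.sum_mul]
  refine Finset.sum_congr rfl fun S hS => ?_
  rw [(Finset.mem_powersetCard.mp hS).2]

lemma nonneg_of_Esym {d : ℕ} {μ : Fin d → ℝ} (h : ∀ m, 0 ≤ Esym μ m) : ∀ i, 0 ≤ μ i := by
  by_contra hc
  push_neg at hc
  obtain ⟨j, hj⟩ := hc
  set t : ℝ := -μ j with ht
  have ht0 : 0 < t := by simp [ht]; linarith
  have hzero : ∏ i, (μ i + t) = 0 :=
    Finset.prod_eq_zero (Finset.mem_univ j) (by simp [ht])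
  rw [prod_add_eq_sum_Esym] at hzero
  have hpos : (0:ℝ) < ∑ m ∈ Finset.range (d + 1), Esym μ m * t ^ (d - m) := by
    have h0 : Esym μ 0 * t ^ (d - 0) = t ^ d := by rw [Esym_zero]; simp
    calc (0:ℝ) < t ^ d := pow_pos ht0 d
    _ = Esym μ 0 * t ^ (d - 0) := h0.symm
    _ ≤ ∑ m ∈ Finset.range (d + 1), Esym μ m * t ^ (d - m) :=
        Finset.single_le_sum (f := fun m => Esym μ m * t ^ (d - m))
          (fun m _ => mul_nonneg (h m) (le_of_lt (pow_pos ht0 _)))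
          (Finset.mem_range.mpr (Nat.succ_pos d))
  rw [hzero] at hpos
  exact lt_irrefl 0 hpos
lemma aeval_esymm {d : ℕ} (μ : Fin d → ℝ) (k : ℕ) :
    MvPolynomial.aeval μ (MvPolynomial.esymm (Fin d) ℝ k) = Esym μ k := by
  simp [MvPolynomial.esymm, Esym, map_sum, map_prod]

lemma aeval_psum {d : ℕ} (μ : Fin d → ℝ) (k : ℕ) :
    MvPolynomial.aeval μ (MvPolynomial.psum (Fin d) ℝ k) = ∑ i, μ i ^ k := by
  simp [MvPolynomial.psum]

lemma newton {d : ℕ} (μ : Fin d → ℝ) (m : ℕ) :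
    ((m : ℝ) + 1) * Esym μ (m + 1) =
      ∑ l ∈ Finset.range (m + 1), (-1 : ℝ) ^ l * (∑ i, μ i ^ (l + 1)) * Esym μ (m - l) := by
  have H := congrArg (MvPolynomial.aeval μ) (MvPolynomial.mul_esymm_eq_sum (Fin d) ℝ (m + 1))
  simp only [_root_.map_mul, map_sum, map_pow, map_neg, _root_.map_one, map_natCast, aeval_esymm,
    aeval_psum] at H
  have hS : (∑ a ∈ (Finset.HasAntidiagonal.antidiagonal (m + 1)).filter (fun a => a.1 < m + 1),
        (-1 : ℝ) ^ a.1 * Esym μ a.1 * ∑ i, μ i ^ a.2)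
      = ∑ i ∈ Finset.range (m + 1), (-1 : ℝ) ^ i * Esym μ i * ∑ j, μ j ^ (m + 1 - i) := by
    rw [Finset.sum_filter, Finset.Nat.sum_antidiagonal_eq_sum_range_succ_mk,
      Finset.sum_range_succ]
    simp only [lt_irrefl, if_false, add_zero]
    exact Finset.sum_congr rfl fun i hi => if_pos (Finset.mem_range.mp hi)
  have hrefl : ∑ l ∈ Finset.range (m + 1),
        (-1 : ℝ) ^ (m - l) * Esym μ (m - l) * ∑ j, μ j ^ (m + 1 - (m - l))
      = ∑ i ∈ Finset.range (m + 1), (-1 : ℝ) ^ i * Esym μ i * ∑ j, μ j ^ (m + 1 - i) := by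
    exact Finset.sum_range_reflect (fun i => (-1 : ℝ) ^ i * Esym μ i * ∑ j, μ j ^ (m + 1 - i))
      (m + 1)
  rw [hS, ← hrefl, Finset.mul_sum] at H
  push_cast at H
  rw [H]
  refine Finset.sum_congr rfl fun l hl => ?_
  have hlm : l ≤ m := Nat.lt_succ_iff.mp (Finset.mem_range.mp hl)
  have he : m + 1 - (m - l) = l + 1 := by omega
  have hsign : (-1 : ℝ) ^ (m + 1 + 1) * (-1) ^ (m - l) = (-1) ^ l := by
    rw [← pow_add, show m + 1 + 1 + (m - l) = 2 * (m + 1 - l) + l by omega, pow_add, pow_mul,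
      neg_one_sq, one_pow, one_mul]
  rw [he, ← hsign]
  ring
lemma conj_pow_eq {d : ℕ} {A U D : Matrix (Fin d) (Fin d) ℂ}
    (hUU : star U * U = 1) (hUU' : U * star U = 1) (hA : A = U * D * star U) (l : ℕ) :
    A ^ l = U * D ^ l * star U := by
  induction l with
  | zero => rw [pow_zero, pow_zero, mul_one, hUU']
  | succ n ih =>
      rw [pow_succ, ih, hA, pow_succ]
      calc U * D ^ n * star U * (U * D * star U)
          = U * D ^ n * (star U * U) * (D * star U) := by noncomm_ring
        _ = U * (D ^ n * D) * star U := by rw [hUU, mul_one]; noncomm_ring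

lemma trace_pow_eq {d : ℕ} {A : Matrix (Fin d) (Fin d) ℂ} (hA : A.IsHermitian) (l : ℕ) :
    (A ^ l).trace = ((∑ i, hA.eigenvalues i ^ l : ℝ) : ℂ) := by
  set U : Matrix (Fin d) (Fin d) ℂ := (hA.eigenvectorUnitary : Matrix (Fin d) (Fin d) ℂ)
  have hUU : star U * U = 1 := Matrix.mem_unitaryGroup_iff'.mp hA.eigenvectorUnitary.2
  have hUU' : U * star U = 1 := Matrix.mem_unitaryGroup_iff.mp hA.eigenvectorUnitary.2
  have hsp : A = U * Matrix.diagonal (RCLike.ofReal ∘ hA.eigenvalues) * star U :=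
    hA.spectral_theorem
  rw [conj_pow_eq hUU hUU' hsp l, Matrix.trace_mul_comm, ← mul_assoc, hUU, one_mul,
    Matrix.diagonal_pow, Matrix.trace_diagonal]
  push_cast
  simp [Function.comp]


lemma spoly_eq_esym {d : ℕ} {A : Matrix (Fin d) (Fin d) ℂ} (hA : A.IsHermitian) :
    ∀ m, Spoly A m = ((Esym hA.eigenvalues m : ℝ) : ℂ) := by
  intro m
  induction m using Nat.strong_induction_on with
  | _ m ih =>
    match m with
    | 0 => rw [Spoly, Esym_zero]; norm_num
    | Nat.succ m =>
      rw [Spoly]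
      have hsum : ∑ l ∈ Finset.range (m + 1), (-1 : ℂ) ^ l * (A ^ (l + 1)).trace * Spoly A (m - l)
          = (((m : ℝ) + 1) * Esym hA.eigenvalues (m + 1) : ℝ) := by
        rw [newton hA.eigenvalues m]
        push_cast
        refine Finset.sum_congr rfl fun l hl => ?_
        rw [trace_pow_eq hA (l + 1), ih (m - l) (by omega)]
        push_cast
        ring
      rw [hsum]
      have hm : ((m : ℂ) + 1) ≠ 0 := by
        have : (0:ℝ) < (m:ℝ) + 1 := by positivity
        simp only [ne_eq]
        intro h
        have := congrArg Complex.re h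
        push_cast at this
        simp at this
        linarith
      push_cast
      field_simp

lemma eigenvalues_sum_eq_trace {d : ℕ} {A : Matrix (Fin d) (Fin d) ℂ} (hA : A.IsHermitian) :
    ((∑ i, hA.eigenvalues i : ℝ) : ℂ) = A.trace := by
  have := trace_pow_eq hA 1
  simpa using this.symm

lemma psd_trace_zero_eq_zero {d : ℕ} {M : Matrix (Fin d) (Fin d) ℂ}
    (hM : M.PosSemidef) (h : M.trace = 0) : M = 0 := by
  have hH := hM.isHermitian
  have hsum : ∑ i, hH.eigenvalues i = 0 := by
    have := eigenvalues_sum_eq_trace hH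
    rw [h] at this
    exact_mod_cast this
  have hzero : ∀ i, hH.eigenvalues i = 0 := by
    intro i
    have := Finset.sum_eq_zero_iff_of_nonneg
      (fun j (_ : j ∈ Finset.univ) => hM.eigenvalues_nonneg j) |>.mp hsum
    exact this i (Finset.mem_univ i)
  have hsp := hH.spectral_theorem
  rw [hsp]
  have : Matrix.diagonal (RCLike.ofReal ∘ hH.eigenvalues) = (0 : Matrix (Fin d) (Fin d) ℂ) := by
    ext i j
    by_cases hij : i = j <;> simp [Matrix.diagonal, hij, hzero]
  rw [this, map_zero]

lemma isHermitian_smul_real {d : ℕ} {M : Matrix (Fin d) (Fin d) ℂ} (hM : M.IsHermitian)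
    (r : ℝ) : ((r : ℂ) • M).IsHermitian := by
  unfold Matrix.IsHermitian
  rw [Matrix.conjTranspose_smul, hM.eq]
  congr 1
  simp

lemma posSemidef_smul_real {d : ℕ} {M : Matrix (Fin d) (Fin d) ℂ} (hM : M.PosSemidef)
    {r : ℝ} (hr : 0 ≤ r) : ((r : ℂ) • M).PosSemidef := by
  have h1 : (0:ℂ) ≤ (r : ℂ) := by
    rw [Complex.zero_le_real]; exact hr
  exact hM.smul h1

lemma real_neg_iff {x : ℝ} : ((x : ℂ) < 0) ↔ x < 0 := by
  rw [show (0:ℂ) = ((0:ℝ):ℂ) by norm_num, Complex.real_lt_real]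

lemma not_psd_iff_exists_spoly_neg {d : ℕ} {A : Matrix (Fin d) (Fin d) ℂ}
    (hA : A.IsHermitian) (htr : A.trace = 1) :
    ¬ A.PosSemidef ↔ ∃ m ∈ Finset.Icc 2 d, Spoly A m < 0 := by
  have hsum : ∑ i, hA.eigenvalues i = 1 := by
    have := eigenvalues_sum_eq_trace hA
    rw [htr] at this
    exact_mod_cast this
  constructor
  · intro hn
    by_contra hc
    push_neg at hc
    apply hn
    refine hA.posSemidef_iff_eigenvalues_nonneg.mpr ?_
    refine nonneg_of_Esym (fun m => ?_)
    rcases Nat.lt_or_ge m 2 with hm2 | hm2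
    · interval_cases m
      · rw [Esym_zero]; norm_num
      · rw [Esym_one, hsum]; norm_num
    · rcases Nat.lt_or_ge d m with hdm | hdm
      · rw [Esym_of_gt _ hdm]
      · have := hc m (Finset.mem_Icc.mpr ⟨hm2, hdm⟩)
        rw [spoly_eq_esym hA m, real_neg_iff] at this
        linarith
  · rintro ⟨m, _, hlt⟩ hpsd
    have h0 : 0 ≤ Esym hA.eigenvalues m :=
      Esym_nonneg (fun i => hpsd.eigenvalues_nonneg i) m
    rw [spoly_eq_esym hA m, real_neg_iff] at hlt
    linarith


section Main

variable {d : ℕ} {F : Set (Matrix (Fin d) (Fin d) ℂ)} {ρ : Matrix (Fin d) (Fin d) ℂ}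

/-- `Pos F ρ s` : some `σ ∈ F` has `(1+s)σ - ρ` PSD. -/
def PosAt (F : Set (Matrix (Fin d) (Fin d) ℂ)) (ρ : Matrix (Fin d) (Fin d) ℂ) (s : ℝ) : Prop :=
  ∃ σ ∈ F, (((1 : ℂ) + (s : ℂ)) • σ - ρ).PosSemidef

lemma one_add_ne (s : ℝ) (hs : 0 ≤ s) : ((1 : ℂ) + (s : ℂ)) ≠ 0 := by
  have : ((1 : ℂ) + (s : ℂ)) = (((1 + s : ℝ)) : ℂ) := by push_cast; ring
  rw [this, ne_eq, Complex.ofReal_eq_zero]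
  intro h; linarith

lemma key_iff (hF : ∀ σ ∈ F, IsDensityMatrix σ) (hρ : IsDensityMatrix ρ)
    {s : ℝ} (hs : 0 < s) {σ : Matrix (Fin d) (Fin d) ℂ} (hσF : σ ∈ F) :
    (∃ m ∈ Finset.Icc 2 d, Sres ρ s m σ < 0) ↔
      ¬ (((1 : ℂ) + (s : ℂ)) • σ - ρ).PosSemidef := by
  obtain ⟨hσpsd, hσtr⟩ := hF σ hσF
  obtain ⟨hρpsd, hρtr⟩ := hρ
  set B : Matrix (Fin d) (Fin d) ℂ := ((1 : ℂ) + (s : ℂ)) • σ - ρ with hB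
  set A : Matrix (Fin d) (Fin d) ℂ := (s : ℂ)⁻¹ • B with hAdef
  have hcast1 : ((1 : ℂ) + (s : ℂ)) = (((1 + s : ℝ)) : ℂ) := by push_cast; ring
  have hBH : B.IsHermitian := by
    rw [hB, hcast1]
    exact (isHermitian_smul_real hσpsd.isHermitian (1 + s)).sub hρpsd.isHermitian
  have hcast2 : ((s : ℂ))⁻¹ = (((s⁻¹ : ℝ)) : ℂ) := by push_cast; ring
  have hAH : A.IsHermitian := by
    rw [hAdef, hcast2]; exact isHermitian_smul_real hBH s⁻¹
  have hsne : (s : ℂ) ≠ 0 := by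
    rw [ne_eq, Complex.ofReal_eq_zero]; exact ne_of_gt hs
  have hAtr : A.trace = 1 := by
    rw [hAdef, Matrix.trace_smul, hB, Matrix.trace_sub, Matrix.trace_smul, hσtr, hρtr]
    rw [smul_eq_mul, smul_eq_mul, mul_one]
    field_simp
    ring
  have hsres : ∀ m, Sres ρ s m σ = Spoly A m := fun m => rfl
  have hPSD : A.PosSemidef ↔ B.PosSemidef := by
    constructor
    · intro hA
      have : B = (s : ℂ) • A := by
        rw [hAdef, smul_smul, mul_inv_cancel₀ hsne, one_smul]
      rw [this]
      exact posSemidef_smul_real hA (le_of_lt hs)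
    · intro hBp
      rw [hAdef, hcast2]
      exact posSemidef_smul_real hBp (by positivity)
  constructor
  · rintro ⟨m, hm, hlt⟩ hBp
    rw [hsres] at hlt
    exact (not_psd_iff_exists_spoly_neg hAH hAtr).mpr ⟨m, hm, hlt⟩ (hPSD.mpr hBp)
  · intro hnB
    have := (not_psd_iff_exists_spoly_neg hAH hAtr).mp (fun hAp => hnB (hPSD.mp hAp))
    obtain ⟨m, hm, hlt⟩ := this
    exact ⟨m, hm, by rw [hsres]; exact hlt⟩


lemma mem_G_posAt (hF : ∀ σ ∈ F, IsDensityMatrix σ) {s : ℝ}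
    (hsG : 0 ≤ s ∧ ∃ τ, IsDensityMatrix τ ∧
      ((1 : ℂ) + (s : ℂ))⁻¹ • (ρ + (s : ℂ) • τ) ∈ F) : PosAt F ρ s := by
  obtain ⟨hs0, τ, ⟨hτpsd, hτtr⟩, hmem⟩ := hsG
  refine ⟨_, hmem, ?_⟩
  have hne := one_add_ne s hs0
  have : ((1 : ℂ) + (s : ℂ)) • (((1 : ℂ) + (s : ℂ))⁻¹ • (ρ + (s : ℂ) • τ)) - ρ
      = (s : ℂ) • τ := by
    rw [smul_smul, mul_inv_cancel₀ hne, one_smul, add_sub_cancel_left]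
  rw [this]
  exact posSemidef_smul_real hτpsd hs0

lemma posAt_mem_G (hF : ∀ σ ∈ F, IsDensityMatrix σ) {s : ℝ} (hs : 0 < s)
    (hp : PosAt F ρ s) (hρ : IsDensityMatrix ρ) :
    0 ≤ s ∧ ∃ τ, IsDensityMatrix τ ∧
      ((1 : ℂ) + (s : ℂ))⁻¹ • (ρ + (s : ℂ) • τ) ∈ F := by
  obtain ⟨σ, hσF, hpsd⟩ := hp
  obtain ⟨hσpsd, hσtr⟩ := hF σ hσF
  have hsne : (s : ℂ) ≠ 0 := by
    rw [ne_eq, Complex.ofReal_eq_zero]; exact ne_of_gt hs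
  have hne := one_add_ne s hs.le
  set B : Matrix (Fin d) (Fin d) ℂ := ((1 : ℂ) + (s : ℂ)) • σ - ρ with hB
  refine ⟨hs.le, (s : ℂ)⁻¹ • B, ⟨?_, ?_⟩, ?_⟩
  · rw [show ((s:ℂ))⁻¹ = (((s⁻¹ : ℝ)) : ℂ) by push_cast; ring]
    exact posSemidef_smul_real hpsd (by positivity)
  · rw [Matrix.trace_smul, hB, Matrix.trace_sub, Matrix.trace_smul, hσtr, hρ.2]
    rw [smul_eq_mul, smul_eq_mul, mul_one]
    field_simp
    ring
  · have h1 : ρ + (s : ℂ) • ((s : ℂ)⁻¹ • B) = ((1 : ℂ) + (s : ℂ)) • σ := by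
      rw [smul_smul, mul_inv_cancel₀ hsne, one_smul, hB, add_sub_cancel]
    rw [h1, smul_smul, inv_mul_cancel₀ hne, one_smul]
    exact hσF

lemma posAt_mono (hF : ∀ σ ∈ F, IsDensityMatrix σ) {s t : ℝ} (hst : s ≤ t)
    (hp : PosAt F ρ s) : PosAt F ρ t := by
  obtain ⟨σ, hσF, hpsd⟩ := hp
  refine ⟨σ, hσF, ?_⟩
  have h1 : ((1 : ℂ) + (t : ℂ)) • σ - ρ
      = (((1 : ℂ) + (s : ℂ)) • σ - ρ) + (((t - s : ℝ)) : ℂ) • σ := by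
    have : (((t - s : ℝ)) : ℂ) = (t : ℂ) - (s : ℂ) := by push_cast; ring
    rw [this]
    module
  rw [h1]
  exact hpsd.add (posSemidef_smul_real (hF σ hσF).1 (by linarith))

lemma not_posAt_zero (hρ : IsDensityMatrix ρ) (hρF : ρ ∉ F)
    (hF : ∀ σ ∈ F, IsDensityMatrix σ) : ¬ PosAt F ρ 0 := by
  rintro ⟨σ, hσF, hpsd⟩
  have h1 : ((1 : ℂ) + ((0:ℝ) : ℂ)) • σ - ρ = σ - ρ := by
    norm_num
  rw [h1] at hpsd
  have htr : (σ - ρ).trace = 0 := by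
    rw [Matrix.trace_sub, (hF σ hσF).2, hρ.2, sub_self]
  have := psd_trace_zero_eq_zero hpsd htr
  have hσρ : σ = ρ := by
    have := sub_eq_zero.mp this
    exact this
  exact hρF (hσρ ▸ hσF)

end Main

/-- For a nonempty closed set `F` of density matrices and a density matrix `ρ ∉ F`
with `R_F(ρ)` finite, the supremum of all `s > 0` such that for every `σ ∈ F` some
`m ∈ {2, …, d}` has `S_{m,ρ,s}(σ) < 0` equals `R_F(ρ)`. -/
theorem sSup_witness_eq_robustness {d : ℕ}
    (F : Set (Matrix (Fin d) (Fin d) ℂ)) (hFne : F.Nonempty) (hFc : IsClosed F)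
    (hF : ∀ σ ∈ F, IsDensityMatrix σ)
    (ρ : Matrix (Fin d) (Fin d) ℂ) (hρ : IsDensityMatrix ρ) (hρF : ρ ∉ F)
    (hfin : Robustness F ρ ≠ ⊤) :
    (⨆ s ∈ {s : ℝ | 0 < s ∧ ∀ σ ∈ F, ∃ m ∈ Finset.Icc 2 d, Sres ρ s m σ < 0},
      ENNReal.ofReal s) = Robustness F ρ := by
  have hLpos : ∀ s ∈ {s : ℝ | 0 < s ∧ ∀ σ ∈ F, ∃ m ∈ Finset.Icc 2 d, Sres ρ s m σ < 0},
      ¬ PosAt F ρ s := by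
    rintro s ⟨hs0, hall⟩ ⟨σ, hσF, hpsd⟩
    exact (key_iff hF hρ hs0 hσF).mp (hall σ hσF) hpsd
  have hle : (⨆ s ∈ {s : ℝ | 0 < s ∧ ∀ σ ∈ F, ∃ m ∈ Finset.Icc 2 d, Sres ρ s m σ < 0},
      ENNReal.ofReal s) ≤ Robustness F ρ := by
    rw [Robustness]
    refine iSup₂_le fun s hs => le_iInf₂ fun t ht => ?_
    refine ENNReal.ofReal_le_ofReal ?_
    by_contra hcon
    push_neg at hcon
    exact hLpos s hs (posAt_mono hF hcon.le (mem_G_posAt hF ht))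
  refine le_antisymm hle ?_
  by_contra hc
  push_neg at hc
  set S := ⨆ s ∈ {s : ℝ | 0 < s ∧ ∀ σ ∈ F, ∃ m ∈ Finset.Icc 2 d, Sres ρ s m σ < 0},
      ENNReal.ofReal s with hS
  have hSne : S ≠ ⊤ := hc.ne_top
  have hST : S.toReal < (Robustness F ρ).toReal :=
    (ENNReal.toReal_lt_toReal hSne hfin).mpr hc
  set t := (S.toReal + (Robustness F ρ).toReal) / 2 with htdef
  have h1 : S.toReal < t := by rw [htdef]; linarith
  have h2 : t < (Robustness F ρ).toReal := by rw [htdef]; linarith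
  have ht0 : 0 < t := lt_of_le_of_lt ENNReal.toReal_nonneg h1
  have hofR : ENNReal.ofReal t < Robustness F ρ := by
    rw [← ENNReal.ofReal_toReal hfin]
    exact (ENNReal.ofReal_lt_ofReal_iff (lt_trans ht0 h2)).mpr h2
  have hSt : S < ENNReal.ofReal t := by
    rw [← ENNReal.ofReal_toReal hSne]
    exact (ENNReal.ofReal_lt_ofReal_iff ht0).mpr h1
  have htG : t ∉ {s : ℝ | 0 ≤ s ∧ ∃ τ, IsDensityMatrix τ ∧
      ((1 : ℂ) + (s : ℂ))⁻¹ • (ρ + (s : ℂ) • τ) ∈ F} := by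
    intro h
    have : Robustness F ρ ≤ ENNReal.ofReal t := by
      rw [Robustness]
      exact iInf₂_le t h
    exact absurd this (not_le.mpr hofR)
  have hnp : ¬ PosAt F ρ t := fun hp => htG (posAt_mem_G hF ht0 hp hρ)
  have htL : t ∈ {s : ℝ | 0 < s ∧ ∀ σ ∈ F, ∃ m ∈ Finset.Icc 2 d, Sres ρ s m σ < 0} :=
    ⟨ht0, fun σ hσF => (key_iff hF hρ ht0 hσF).mpr (fun hpsd => hnp ⟨σ, hσF, hpsd⟩)⟩
  have hfinal : ENNReal.ofReal t ≤ S := by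
    rw [hS]
    exact le_iSup₂ (f := fun s _ => ENNReal.ofReal s) t htL
  exact absurd (lt_of_le_of_lt hfinal hSt) (lt_irrefl _)
end
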